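/- Let κ be a regular uncountable cardinal, let C be a club in κ, and let x be a bounded operator on ℓ²(κ). Then x ∈ D[C] if and only if ℓ²(min C) is an invariant subspace of x and, for every δ ∈ C, ℓ²([δ, succ_C(δ))) is an invariant subspace of x. -/

import Mathlib

noncomputable section

open Set

/-- The Hilbert space ℓ²(o): square-summable families indexed by the ordinals below `o`. -/
abbrev L2 (o : Ordinal) : Type := ↥(lp (fun _ : o.ToType => ℂ) 2)

/-- Bounded linear operators on ℓ²(o). -/
abbrev Bd (o : Ordinal) : Type := L2 o →L[ℂ] L2 o

/-- The ordinal (below `o`) corresponding to an index `i` of ℓ²(o). -/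
def ordOf {o : Ordinal} (i : o.ToType) : Ordinal := ((Ordinal.ToType.mk (o := o)).symm i : Ordinal)

/-- `InvOn o S x` : the closed subspace of ℓ²(o) of functions supported on `S`
is an invariant subspace of `x`. -/
def InvOn (o : Ordinal) (S : Set Ordinal) (x : Bd o) : Prop :=
  ∀ f : L2 o, (∀ i : o.ToType, ordOf i ∉ S → f i = 0) →
    ∀ i : o.ToType, ordOf i ∉ S → x f i = 0

/-- `Dclub o C` (the algebra `D[C]`) is the set of bounded operators `x` on ℓ²(o) such
that for every `α ∈ C`, ℓ²(α) is an invariant subspace of both `x` and its adjoint. -/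
def Dclub (o : Ordinal) (C : Set Ordinal) : Set (Bd o) :=
  {x | ∀ α ∈ C, InvOn o (Set.Iio α) x ∧ InvOn o (Set.Iio α) (star x)}

/-- A club in (the ordinal) `o`: a closed unbounded subset of `o`. -/
def IsClubIn (o : Ordinal) (C : Set Ordinal) : Prop :=
  C ⊆ Set.Iio o ∧
  (∀ s ⊆ C, s.Nonempty → sSup s < o → sSup s ∈ C) ∧
  (∀ α < o, ∃ β ∈ C, α < β)

/-- The least element of `C` strictly above `α`. -/
def clubSucc (C : Set Ordinal) (α : Ordinal) : Ordinal :=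
  sInf {β | β ∈ C ∧ α < β}

/-- `memJ κ x` : the (Hilbert space) dimension of the range of `x` is `< κ`;
equivalently (for uncountable κ), the range of `x` is contained in the closure
of a set of cardinality `< κ`. -/
def memJ (κ : Cardinal) {o : Ordinal} (x : Bd o) : Prop :=
  ∃ D : Set (L2 o), Cardinal.mk D < κ ∧ Set.range ⇑x ⊆ closure D

lemma ordOf_lt {o : Ordinal} (i : o.ToType) : ordOf i < o :=
  ((Ordinal.ToType.mk (o := o)).symm i).2

/-- Evaluation at a coordinate, as a continuous linear map. -/
def evCLM (o : Ordinal) (i : o.ToType) : L2 o →L[ℂ] ℂ :=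
  LinearMap.mkContinuous
    { toFun := fun f => f i
      map_add' := fun f g => by simp [lp.coeFn_add]
      map_smul' := fun c f => by simp [lp.coeFn_smul] }
    1 (fun f => by
      show ‖f i‖ ≤ 1 * ‖f‖; simpa using lp.norm_apply_le_norm (by norm_num : (2 : ENNReal) ≠ 0) f i)

lemma evCLM_apply {o : Ordinal} (i : o.ToType) (f : L2 o) : evCLM o i f = f i := rfl

/-- Matrix characterization of `InvOn`. -/
lemma invOn_iff (o : Ordinal) (S : Set Ordinal) (x : Bd o) :
    InvOn o S x ↔ ∀ j i : o.ToType, ordOf j ∈ S → ordOf i ∉ S →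
      x (lp.single 2 j 1) i = 0 := by
  classical
  constructor
  · intro h j i hj hi
    refine h (lp.single 2 j 1) (fun k hk => ?_) i hi
    exact lp.single_apply_ne 2 j 1 (fun e => hk (e ▸ hj))
  · intro h f hf i hi
    have h1 : HasSum (fun j : o.ToType => lp.single 2 j (f j)) f :=
      lp.hasSum_single ENNReal.ofNat_ne_top f
    have h2 : HasSum (fun j : o.ToType => evCLM o i (x (lp.single 2 j (f j))))
        (evCLM o i (x f)) := h1.mapL ((evCLM o i).comp x)
    have hterm : ∀ j : o.ToType, evCLM o i (x (lp.single 2 j (f j))) = 0 := by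
      intro j
      by_cases hj : ordOf j ∈ S
      · have hs : lp.single (E := fun _ : o.ToType => ℂ) 2 j (f j) = f j • lp.single 2 j (1 : ℂ) := by
          rw [← lp.single_smul, smul_eq_mul, mul_one]
        rw [hs, map_smul, map_smul, evCLM_apply, h j i hj hi, smul_zero]
      · have h0 : f j = 0 := hf j hj
        have hz : lp.single (E := fun _ : o.ToType => ℂ) 2 j (f j) = 0 := by
          rw [h0, ← zero_smul ℂ (lp.single (E := fun _ : o.ToType => ℂ) 2 j (1 : ℂ)), ← lp.single_smul, smul_eq_mul,
            zero_mul]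
        rw [hz, map_zero, map_zero]
    have : (fun j : o.ToType => evCLM o i (x (lp.single 2 j (f j)))) = fun _ => 0 :=
      funext hterm
    rw [this] at h2
    exact h2.unique hasSum_zero

lemma star_entry {o : Ordinal} (x : Bd o) (i j : o.ToType) :
    (star x) (lp.single 2 j 1) i = starRingEnd ℂ (x (lp.single 2 i 1) j) := by
  classical
  have h1 : ((star x) (lp.single 2 j 1) : L2 o) i
      = (inner ℂ (lp.single 2 i (1 : ℂ)) ((star x) (lp.single 2 j 1)) : ℂ) := by
    rw [lp.inner_single_left]
    simp [RCLike.inner_apply]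
  rw [h1, ContinuousLinearMap.star_eq_adjoint, ContinuousLinearMap.adjoint_inner_right,
    lp.inner_single_right]
  simp [RCLike.inner_apply]

/-- **Lemma.** For κ regular uncountable, a club `C` in κ and a bounded operator `x` on
ℓ²(κ): `x ∈ D[C]` if and only if ℓ²(min C) is an invariant subspace of `x` and, for every
`δ ∈ C`, ℓ²([δ, succ_C δ)) is an invariant subspace of `x`. -/
theorem mem_Dclub_iff_blocks (κ : Cardinal.{0}) (hreg : κ.IsRegular)
    (hunc : Cardinal.aleph0 < κ) (C : Set Ordinal) (hC : IsClubIn κ.ord C)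
    (x : Bd κ.ord) :
    x ∈ Dclub κ.ord C ↔
      (InvOn κ.ord (Set.Iio (sInf C)) x ∧
        ∀ δ ∈ C, InvOn κ.ord (Set.Ico δ (clubSucc C δ)) x) := by
  classical
  obtain ⟨hsub, hclosed, hunb⟩ := hC
  have hpos : (0 : Ordinal) < κ.ord := by
    rw [← Cardinal.ord_zero]
    exact Cardinal.ord_lt_ord.2 (Cardinal.aleph0_pos.trans hunc)
  have hCne : C.Nonempty := by
    obtain ⟨β, hβ, -⟩ := hunb 0 hpos
    exact ⟨β, hβ⟩
  have hm : sInf C ∈ C := csInf_mem hCne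
  have hsuccmem : ∀ δ ∈ C, clubSucc C δ ∈ C ∧ δ < clubSucc C δ := by
    intro δ hδ
    obtain ⟨β, hβ, hδβ⟩ := hunb δ (hsub hδ)
    exact csInf_mem (⟨β, hβ, hδβ⟩ : {β | β ∈ C ∧ δ < β}.Nonempty)
  have hsucc_le : ∀ δ, ∀ α ∈ C, δ < α → clubSucc C δ ≤ α := fun δ α hα h =>
    csInf_le' ⟨hα, h⟩
  -- every β ∈ [sInf C, κ.ord) lies in a unique block
  have hpart : ∀ β, β < κ.ord → sInf C ≤ β →
      ∃ δ ∈ C, δ ≤ β ∧ β < clubSucc C δ ∧ ∀ α ∈ C, α ≤ β → α ≤ δ := by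
    intro β hβo hβm
    set s : Set Ordinal := C ∩ Set.Iic β with hs
    have hne : s.Nonempty := ⟨sInf C, hm, hβm⟩
    have hbdd : BddAbove s := ⟨β, fun a ha => ha.2⟩
    have hsup_le : sSup s ≤ β := csSup_le hne (fun a ha => ha.2)
    have hδC : sSup s ∈ C := hclosed s Set.inter_subset_left hne (lt_of_le_of_lt hsup_le hβo)
    have hmax : ∀ α ∈ C, α ≤ β → α ≤ sSup s := fun α hα h => le_csSup hbdd ⟨hα, h⟩
    refine ⟨sSup s, hδC, hsup_le, ?_, hmax⟩
    by_contra hcon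
    push_neg at hcon
    have h1 := (hsuccmem _ hδC).2
    have h2 := hmax _ (hsuccmem _ hδC).1 hcon
    exact absurd h1 (not_lt.2 h2)
  simp only [Dclub, Set.mem_setOf_eq]
  constructor
  · intro h
    refine ⟨(h _ hm).1, ?_⟩
    intro δ hδ
    rw [invOn_iff]
    intro j i hj hi
    rw [Set.mem_Ico] at hj
    rw [Set.mem_Ico, not_and_or, not_le, not_lt] at hi
    rcases hi with hi | hi
    · -- ordOf i < δ : use the adjoint part at α = δ
      have h2 := (invOn_iff _ _ _).1 (h δ hδ).2 i j hi (not_lt.2 hj.1)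
      rw [star_entry] at h2
      simpa using h2
    · -- clubSucc C δ ≤ ordOf i : use the x part at α = clubSucc C δ
      exact (invOn_iff _ _ _).1 (h _ (hsuccmem δ hδ).1).1 j i hj.2 (not_lt.2 hi)
  · rintro ⟨h0, hb⟩ α hα
    constructor
    · rw [invOn_iff]
      intro j i hj hi
      rw [Set.mem_Iio] at hj
      rw [Set.mem_Iio, not_lt] at hi
      by_cases hjm : ordOf j < sInf C
      · exact (invOn_iff _ _ _).1 h0 j i hjm
          (by rw [Set.mem_Iio, not_lt]; exact (csInf_le' hα).trans hi)
      · push_neg at hjm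
        obtain ⟨δ, hδC, hδle, hδlt, hmax⟩ := hpart (ordOf j) (ordOf_lt j) hjm
        refine (invOn_iff _ _ _).1 (hb δ hδC) j i ⟨hδle, hδlt⟩ ?_
        rw [Set.mem_Ico, not_and_or, not_lt]
        right
        exact (hsucc_le δ α hα (lt_of_le_of_lt hδle hj)).trans hi
    · rw [invOn_iff]
      intro j i hj hi
      rw [Set.mem_Iio] at hj
      rw [Set.mem_Iio, not_lt] at hi
      rw [star_entry]
      -- need : x (lp.single 2 i 1) j = 0, with sInf C ≤ α ≤ ordOf i, ordOf j < α
      have him : sInf C ≤ ordOf i := (csInf_le' hα).trans hi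
      obtain ⟨δ, hδC, hδle, hδlt, hmax⟩ := hpart (ordOf i) (ordOf_lt i) him
      have hαδ : α ≤ δ := hmax α hα hi
      have hz : x (lp.single 2 i 1) j = 0 := by
        refine (invOn_iff _ _ _).1 (hb δ hδC) i j ⟨hδle, hδlt⟩ ?_
        rw [Set.mem_Ico, not_and_or, not_le]
        left
        exact lt_of_lt_of_le hj hαδ
      rw [hz]
      simp
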